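/- arXiv:2103.15694 — 2 statements merged into one kernel-verified Lean document; each statement's English description precedes it below -/
import Mathlib

section
/- Let x : Ω → ℂ^N be a random vector with all products x_n · conj(x_{n'}) integrable and E[x_n · conj(x_{n'})] = σ² δ_{n,n'}, let F_N be the N×N unitary DFT matrix, let D ∈ ℂ^{N×N} be diagonal, and let b₁, b₂ ∈ ℂ^N. Then E[ b₁^H · diag(x)^H · F_N D F_N^H · diag(x) · b₂ ] = σ² · (tr(D)/N) · (b₁^H b₂). In particular, if b₁^H b₂ = 0, this expectation is zero. -/
open Matrix MeasureTheory

/-- The `N×N` unitary DFT matrix, `[F_N]_{ℓ,n} = (1/√N) e^{-2πi nℓ/N}`. -/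
noncomputable def dftMatrix (N : ℕ) : Matrix (Fin N) (Fin N) ℂ :=
  fun l n => (1 / (Real.sqrt N : ℂ)) *
    Complex.exp (-(2 * (Real.pi : ℂ) * Complex.I * ((n : ℕ) : ℂ) * ((l : ℕ) : ℂ) / (N : ℂ)))

lemma dft_mul_conj (N : ℕ) (n l : Fin N) :
    dftMatrix N n l * (starRingEnd ℂ) (dftMatrix N n l) = 1 / (N : ℂ) := by
  have hN : (0:ℝ) < N := Nat.cast_pos.mpr n.pos
  unfold dftMatrix
  rw [_root_.map_mul, ← Complex.exp_conj]
  have h1 : (starRingEnd ℂ) (1 / (Real.sqrt N : ℂ)) = 1 / (Real.sqrt N : ℂ) := by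
    simp [Complex.conj_ofReal]
  rw [h1]
  have h2 : (starRingEnd ℂ) (-(2 * (Real.pi : ℂ) * Complex.I * ((l:ℕ) : ℂ) * ((n:ℕ) : ℂ) / (N : ℂ)))
      = -(-(2 * (Real.pi : ℂ) * Complex.I * ((l:ℕ) : ℂ) * ((n:ℕ) : ℂ) / (N : ℂ))) := by
    simp [map_div₀, map_neg, _root_.map_mul, Complex.conj_I, Complex.conj_ofReal,
      map_ofNat]
    ring
  rw [h2]
  have h3 : (1 / (Real.sqrt N : ℂ)) * (1 / (Real.sqrt N : ℂ)) = 1 / (N : ℂ) := by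
    rw [div_mul_div_comm, one_mul, ← Complex.ofReal_mul, Real.mul_self_sqrt hN.le,
      Complex.ofReal_natCast]
  calc (1 / (Real.sqrt N : ℂ)) * Complex.exp _ * ((1 / (Real.sqrt N : ℂ)) * Complex.exp _)
      = ((1 / (Real.sqrt N : ℂ)) * (1 / (Real.sqrt N : ℂ))) *
        (Complex.exp (-(2 * (Real.pi : ℂ) * Complex.I * ((l:ℕ) : ℂ) * ((n:ℕ) : ℂ) / (N : ℂ))) *
         Complex.exp (-(-(2 * (Real.pi : ℂ) * Complex.I * ((l:ℕ) : ℂ) * ((n:ℕ) : ℂ) / (N : ℂ))))) := by ring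
    _ = 1 / (N : ℂ) := by rw [← Complex.exp_add, h3]; simp

lemma Mdiag (N : ℕ) (d : Fin N → ℂ) (n : Fin N) :
    (dftMatrix N * Matrix.diagonal d * (dftMatrix N)ᴴ) n n = (∑ l, d l) / (N : ℂ) := by
  rw [Matrix.mul_apply, Finset.sum_div]
  refine Finset.sum_congr rfl fun l _ => ?_
  rw [Matrix.mul_diagonal, Matrix.conjTranspose_apply, ← starRingEnd_apply]
  calc dftMatrix N n l * d l * (starRingEnd ℂ) (dftMatrix N n l)
      = d l * (dftMatrix N n l * (starRingEnd ℂ) (dftMatrix N n l)) := by ring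
    _ = d l / (N : ℂ) := by rw [dft_mul_conj]; ring


/-- If `E[x_n conj(x_{n'})] = σ² δ_{n,n'}` and `D` is diagonal, then
`E[b₁ᴴ diag(x)ᴴ F_N D F_Nᴴ diag(x) b₂] = σ² (tr D / N) (b₁ᴴ b₂)`.
In particular the expectation vanishes when `b₁ᴴ b₂ = 0`. -/
theorem stmt_3 {Ω : Type*} [MeasurableSpace Ω] (μ : Measure Ω) [IsProbabilityMeasure μ]
    (N : ℕ) (x : Ω → Fin N → ℂ) (σsq : ℝ) (hσ : 0 ≤ σsq)
    (hint : ∀ n n' : Fin N, Integrable (fun ω => x ω n * (starRingEnd ℂ) (x ω n')) μ)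
    (hcov : ∀ n n' : Fin N,
      ∫ ω, x ω n * (starRingEnd ℂ) (x ω n') ∂μ = if n = n' then (σsq : ℂ) else 0)
    (d : Fin N → ℂ) (b₁ b₂ : Fin N → ℂ) :
    (∫ ω, star b₁ ⬝ᵥ ((Matrix.diagonal (x ω))ᴴ * dftMatrix N * Matrix.diagonal d *
        (dftMatrix N)ᴴ * Matrix.diagonal (x ω)).mulVec b₂ ∂μ
      = (σsq : ℂ) * (Matrix.trace (Matrix.diagonal d) / (N : ℂ)) * (star b₁ ⬝ᵥ b₂)) ∧
    (star b₁ ⬝ᵥ b₂ = 0 →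
      ∫ ω, star b₁ ⬝ᵥ ((Matrix.diagonal (x ω))ᴴ * dftMatrix N * Matrix.diagonal d *
        (dftMatrix N)ᴴ * Matrix.diagonal (x ω)).mulVec b₂ ∂μ = 0) := by
  set M : Matrix (Fin N) (Fin N) ℂ := dftMatrix N * Matrix.diagonal d * (dftMatrix N)ᴴ with hM
  have key : ∀ ω, star b₁ ⬝ᵥ ((Matrix.diagonal (x ω))ᴴ * dftMatrix N * Matrix.diagonal d *
      (dftMatrix N)ᴴ * Matrix.diagonal (x ω)).mulVec b₂
      = ∑ n, ∑ n', ((starRingEnd ℂ) (b₁ n) * M n n' * b₂ n') *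
          (x ω n' * (starRingEnd ℂ) (x ω n)) := by
    intro ω
    have hmat : (Matrix.diagonal (x ω))ᴴ * dftMatrix N * Matrix.diagonal d *
        (dftMatrix N)ᴴ * Matrix.diagonal (x ω)
        = Matrix.diagonal (star (x ω)) * M * Matrix.diagonal (x ω) := by
      rw [Matrix.diagonal_conjTranspose, hM]; simp only [mul_assoc]
    rw [hmat]
    simp only [dotProduct, Matrix.mulVec, Matrix.diagonal_mul, Matrix.mul_diagonal,
      Pi.star_apply]
    simp only [← starRingEnd_apply]
    refine Finset.sum_congr rfl fun n _ => ?_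
    rw [Finset.mul_sum]
    refine Finset.sum_congr rfl fun n' _ => ?_
    ring
  have h1 : ∫ ω, star b₁ ⬝ᵥ ((Matrix.diagonal (x ω))ᴴ * dftMatrix N * Matrix.diagonal d *
      (dftMatrix N)ᴴ * Matrix.diagonal (x ω)).mulVec b₂ ∂μ
      = (σsq : ℂ) * (Matrix.trace (Matrix.diagonal d) / (N : ℂ)) * (star b₁ ⬝ᵥ b₂) := by
    simp only [key]
    rw [MeasureTheory.integral_finset_sum _
      (fun n _ => integrable_finset_sum _ fun n' _ => (hint n' n).const_mul _)]
    have h2 : ∀ n : Fin N, ∫ ω, ∑ n', ((starRingEnd ℂ) (b₁ n) * M n n' * b₂ n') *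
        (x ω n' * (starRingEnd ℂ) (x ω n)) ∂μ
        = (starRingEnd ℂ) (b₁ n) * M n n * b₂ n * (σsq : ℂ) := by
      intro n
      rw [MeasureTheory.integral_finset_sum _ (fun n' _ => (hint n' n).const_mul _)]
      have h3 : ∀ n' : Fin N, ∫ ω, ((starRingEnd ℂ) (b₁ n) * M n n' * b₂ n') *
          (x ω n' * (starRingEnd ℂ) (x ω n)) ∂μ
          = if n' = n then (starRingEnd ℂ) (b₁ n) * M n n' * b₂ n' * (σsq : ℂ) else 0 := by
        intro n'
        rw [MeasureTheory.integral_const_mul, hcov n' n]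
        split <;> simp
      simp only [h3]
      rw [Finset.sum_ite_eq' Finset.univ n
        (fun n' => (starRingEnd ℂ) (b₁ n) * M n n' * b₂ n' * (σsq : ℂ))]
      simp
    simp only [h2]; simp only [hM, Mdiag, Matrix.trace_diagonal]
    simp only [dotProduct, Pi.star_apply, ← starRingEnd_apply]
    rw [Finset.mul_sum]
    refine Finset.sum_congr rfl fun n _ => ?_
    ring
  exact ⟨h1, fun h => by rw [h1, h, mul_zero]⟩
end

section
/- (Closed-form value of the APES beamforming problem.) Fix matrices Ȳ_0, …, Ȳ_{M−1} ∈ ℂ^{N×N_R}, matrices X̄_0, …, X̄_{M−1} ∈ ℂ^{N×L} each with full column rank, a unitary matrix D ∈ ℂ^{N×N}, and a nonzero vector a ∈ ℂ^{N_R}. Define Q = Σ_{m=0}^{M−1} Ȳ_m^H D (I − X̄_m (X̄_m^H X̄_m)^{-1} X̄_m^H) D^H Ȳ_m, and assume Q is positive definite. Then the minimum of Σ_{m=0}^{M−1} ‖ Ȳ_m w^* − D X̄_m h_m ‖² over all w ∈ ℂ^{N_R} with w^H a = 1 and all h_0, …, h_{M−1} ∈ ℂ^L equals 1 / ( a^H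 (Q^*)^{-1} a ). -/
open Matrix
open scoped ComplexOrder

private lemma aux_dp {p q n : ℕ} (A : Matrix (Fin n) (Fin p) ℂ) (B : Matrix (Fin n) (Fin q) ℂ)
    (x : Fin p → ℂ) (y : Fin q → ℂ) :
    star (A.mulVec x) ⬝ᵥ (B.mulVec y) = star x ⬝ᵥ ((Aᴴ * B).mulVec y) := by
  rw [star_mulVec, dotProduct_mulVec, vecMul_vecMul, ← dotProduct_mulVec, ← mulVec_mulVec]

private lemma aux_re {n : ℕ} (z : Fin n → ℂ) :
    (star z ⬝ᵥ z).re = ∑ i, ‖z i‖ ^ 2 := by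
  simp only [dotProduct, Pi.star_apply, Complex.re_sum]
  refine Finset.sum_congr rfl fun i _ => ?_
  rw [← Complex.normSq_eq_norm_sq, Complex.normSq_apply]
  simp [Complex.mul_re]

private lemma aux_nonneg {n : ℕ} (z : Fin n → ℂ) : 0 ≤ (star z ⬝ᵥ z).re := by
  rw [aux_re]; positivity

private lemma aux_conj {n : ℕ} (Q : Matrix (Fin n) (Fin n) ℂ) (w : Fin n → ℂ) :
    star (star w) ⬝ᵥ Q.mulVec (star w)
      = star (star w ⬝ᵥ (Q.map (starRingEnd ℂ)).mulVec w) := by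
  simp only [dotProduct, mulVec, Pi.star_apply, star_star, Matrix.map_apply, star_sum, star_mul',
    starRingEnd_apply, star_star]

private lemma aux_key {N NR L : ℕ} (Y : Matrix (Fin N) (Fin NR) ℂ) (X : Matrix (Fin N) (Fin L) ℂ)
    (hX : IsUnit (Xᴴ * X)) (D : Matrix (Fin N) (Fin N) ℂ) (hD : Dᴴ * D = 1)
    (v : Fin NR → ℂ) (h : Fin L → ℂ) :
    star (Y.mulVec v - (D * X).mulVec h) ⬝ᵥ (Y.mulVec v - (D * X).mulVec h)
      = star v ⬝ᵥ ((Yᴴ * D * (1 - X * (Xᴴ * X)⁻¹ * Xᴴ) * Dᴴ * Y).mulVec v)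
        + star (X.mulVec ((((Xᴴ * X)⁻¹ * Xᴴ * Dᴴ * Y).mulVec v) - h))
            ⬝ᵥ (X.mulVec ((((Xᴴ * X)⁻¹ * Xᴴ * Dᴴ * Y).mulVec v) - h)) := by
  have hdet : IsUnit (Xᴴ * X).det := (Matrix.isUnit_iff_isUnit_det _).mp hX
  have hG1 : (Xᴴ * X)⁻¹ * (Xᴴ * X) = 1 := Matrix.nonsing_inv_mul _ hdet
  have hG2 : (Xᴴ * X) * (Xᴴ * X)⁻¹ = 1 := Matrix.mul_nonsing_inv _ hdet
  have hGH : ((Xᴴ * X)⁻¹)ᴴ = (Xᴴ * X)⁻¹ := by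
    rw [Matrix.conjTranspose_nonsing_inv]
    congr 1
    rw [Matrix.conjTranspose_mul, Matrix.conjTranspose_conjTranspose]
  have hD' : D * Dᴴ = 1 := mul_eq_one_comm.mp hD
  have cG2 : ∀ {k : ℕ} (B : Matrix (Fin L) (Fin k) ℂ),
      Xᴴ * (X * ((Xᴴ * X)⁻¹ * B)) = B := by
    intro k B
    rw [← Matrix.mul_assoc, ← Matrix.mul_assoc, hG2, Matrix.one_mul]
  have cD' : ∀ {k : ℕ} (B : Matrix (Fin N) (Fin k) ℂ), D * (Dᴴ * B) = B := by
    intro k B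
    rw [← Matrix.mul_assoc, hD', Matrix.one_mul]
  have cD : ∀ {k : ℕ} (B : Matrix (Fin N) (Fin k) ℂ), Dᴴ * (D * B) = B := by
    intro k B
    rw [← Matrix.mul_assoc, hD, Matrix.one_mul]
  set E : Matrix (Fin L) (Fin NR) ℂ := (Xᴴ * X)⁻¹ * Xᴴ * Dᴴ * Y with hE
  have J2 : (X * E)ᴴ * X = Yᴴ * (D * X) := by
    simp only [hE, Matrix.conjTranspose_mul, hGH, Matrix.conjTranspose_conjTranspose,
      Matrix.mul_assoc, cG2, cD, cD', hG1, Matrix.mul_one]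
  have J3 : Xᴴ * (X * E) = (D * X)ᴴ * Y := by
    simp only [hE, Matrix.conjTranspose_mul, Matrix.mul_assoc, cG2, cD, cD', hG1, Matrix.mul_one]
  have J4 : (D * X)ᴴ * (D * X) = Xᴴ * X := by
    simp only [Matrix.conjTranspose_mul, Matrix.mul_assoc, cG2, cD, cD', hG1, Matrix.mul_one]
  have J1 : Yᴴ * Y = Yᴴ * D * (1 - X * (Xᴴ * X)⁻¹ * Xᴴ) * Dᴴ * Y + (X * E)ᴴ * (X * E) := by
    simp only [hE, Matrix.conjTranspose_mul, hGH, Matrix.conjTranspose_conjTranspose,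
      Matrix.mul_sub, Matrix.sub_mul, Matrix.mul_one, Matrix.one_mul,
      Matrix.mul_assoc, cG2, cD, cD', hG1]
    rw [sub_add_cancel]
  simp only [star_sub, sub_dotProduct, dotProduct_sub, Matrix.mulVec_sub, aux_dp,
    Matrix.mulVec_mulVec]
  rw [J2, J3, J4, J1, Matrix.add_mulVec, dotProduct_add]
  ring

/-- Closed-form value of the APES beamforming problem: with
`Q = Σ_m Ȳ_mᴴ D (I − X̄_m (X̄_mᴴ X̄_m)⁻¹ X̄_mᴴ) Dᴴ Ȳ_m` positive definite, the minimum of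
`Σ_m ‖Ȳ_m w^* − D X̄_m h_m‖²` over `wᴴ a = 1` and all `h_m` equals `1/(aᴴ (Q^*)⁻¹ a)`. -/
theorem stmt_9 (N NR L M : ℕ) (Y : Fin M → Matrix (Fin N) (Fin NR) ℂ)
    (X : Fin M → Matrix (Fin N) (Fin L) ℂ) (hX : ∀ m, IsUnit ((X m)ᴴ * X m))
    (D : Matrix (Fin N) (Fin N) ℂ) (hD : Dᴴ * D = 1)
    (a : Fin NR → ℂ) (ha : a ≠ 0)
    (Q : Matrix (Fin NR) (Fin NR) ℂ)
    (hQ : Q = ∑ m, (Y m)ᴴ * D * (1 - X m * ((X m)ᴴ * X m)⁻¹ * (X m)ᴴ) * Dᴴ * Y m)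
    (hQpd : Q.PosDef) :
    IsLeast { r : ℝ | ∃ (w : Fin NR → ℂ) (h : Fin M → Fin L → ℂ),
        star w ⬝ᵥ a = 1 ∧
        r = ∑ m, ∑ i,
          ‖((Y m).mulVec (star w) - (D * X m).mulVec (h m)) i‖ ^ 2 }
      ((1 / (star a ⬝ᵥ ((Q.map (starRingEnd ℂ))⁻¹).mulVec a)).re) := by
  set R : Matrix (Fin NR) (Fin NR) ℂ := Q.map (starRingEnd ℂ) with hRdef
  have hRT : R = Qᵀ := by
    ext i j
    have h1 : Qᴴ j i = Q j i := by rw [hQpd.1]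
    simp only [Matrix.conjTranspose_apply] at h1
    simpa [hRdef, Matrix.map_apply, Matrix.transpose_apply] using h1
  have hRpd : R.PosDef := hRT ▸ hQpd.transpose
  have hRipd : R⁻¹.PosDef := hRpd.inv
  have hRdet : IsUnit R.det := (Matrix.isUnit_iff_isUnit_det _).mp hRpd.isUnit
  have hR1 : R * R⁻¹ = 1 := Matrix.mul_nonsing_inv _ hRdet
  have hR2 : R⁻¹ * R = 1 := Matrix.nonsing_inv_mul _ hRdet
  have hRiH : (R⁻¹)ᴴ = R⁻¹ := hRipd.1
  set c : ℂ := star a ⬝ᵥ R⁻¹.mulVec a with hc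
  have hcpos : 0 < c := hRipd.dotProduct_mulVec_pos ha
  have hcim : c.im = 0 := ((Complex.lt_def).mp hcpos).2.symm
  have hcre : 0 < c.re := by simpa using ((Complex.lt_def).mp hcpos).1
  have hc0 : c ≠ 0 := by
    intro hh; rw [hh] at hcre; simp at hcre
  have hcstar : star c = c := by
    rw [Complex.star_def, Complex.conj_eq_iff_im]; exact hcim
  set w0 : Fin NR → ℂ := c⁻¹ • (R⁻¹.mulVec a) with hw0
  have key_dp : star (R⁻¹.mulVec a) ⬝ᵥ a = c := by
    rw [star_mulVec, ← dotProduct_mulVec, hRiH]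
  have F2 : star w0 ⬝ᵥ a = 1 := by
    rw [hw0, star_smul, smul_dotProduct, key_dp]
    simp only [star_inv₀, hcstar, smul_eq_mul]
    exact inv_mul_cancel₀ hc0
  have F1 : ∀ w : Fin NR → ℂ, star w ⬝ᵥ a = 1 → star w ⬝ᵥ R.mulVec w0 = c⁻¹ := by
    intro w hw
    rw [hw0, Matrix.mulVec_smul, Matrix.mulVec_mulVec, hR1, Matrix.one_mulVec,
      dotProduct_smul, smul_eq_mul, hw, mul_one]
  have F3 : ∀ w : Fin NR → ℂ, star w ⬝ᵥ a = 1 → star w0 ⬝ᵥ R.mulVec w = c⁻¹ := by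
    intro w hw
    rw [hw0, star_smul, smul_dotProduct, aux_dp, hRiH, hR2, Matrix.one_mulVec]
    have : star a ⬝ᵥ w = 1 := by
      rw [star_dotProduct, hw, star_one]
    rw [this]
    simp [star_inv₀, hcstar]
  have Quad : ∀ w : Fin NR → ℂ, star w ⬝ᵥ a = 1 →
      star w ⬝ᵥ R.mulVec w = c⁻¹ + star (w - w0) ⬝ᵥ R.mulVec (w - w0) := by
    intro w hw
    have e1 := F1 w hw
    have e2 := F3 w hw
    have e3 := F1 w0 F2
    simp only [star_sub, Matrix.mulVec_sub, dotProduct_sub, sub_dotProduct, e1, e2, e3]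
    ring
  -- the main value identity
  have main : ∀ (w : Fin NR → ℂ) (h : Fin M → Fin L → ℂ),
      (∑ m, ∑ i, ‖((Y m).mulVec (star w) - (D * X m).mulVec (h m)) i‖ ^ 2)
        = (star w ⬝ᵥ R.mulVec w).re
          + ∑ m, (star ((X m).mulVec (((((X m)ᴴ * X m)⁻¹ * (X m)ᴴ * Dᴴ * Y m).mulVec (star w)) - h m))
              ⬝ᵥ ((X m).mulVec (((((X m)ᴴ * X m)⁻¹ * (X m)ᴴ * Dᴴ * Y m).mulVec (star w)) - h m))).re := by
    intro w h
    have hsum : (∑ m, ∑ i, ‖((Y m).mulVec (star w) - (D * X m).mulVec (h m)) i‖ ^ 2)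
        = ∑ m, ((star (star w) ⬝ᵥ (((Y m)ᴴ * D * (1 - X m * ((X m)ᴴ * X m)⁻¹ * (X m)ᴴ) * Dᴴ * Y m).mulVec (star w))).re
            + (star ((X m).mulVec (((((X m)ᴴ * X m)⁻¹ * (X m)ᴴ * Dᴴ * Y m).mulVec (star w)) - h m))
              ⬝ᵥ ((X m).mulVec (((((X m)ᴴ * X m)⁻¹ * (X m)ᴴ * Dᴴ * Y m).mulVec (star w)) - h m))).re) := by
      refine Finset.sum_congr rfl fun m _ => ?_
      rw [← aux_re, aux_key (Y m) (X m) (hX m) D hD (star w) (h m), Complex.add_re]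
    rw [hsum, Finset.sum_add_distrib]
    congr 1
    rw [← Complex.re_sum]
    have : (∑ m, star (star w) ⬝ᵥ (((Y m)ᴴ * D * (1 - X m * ((X m)ᴴ * X m)⁻¹ * (X m)ᴴ) * Dᴴ * Y m).mulVec (star w)))
        = star (star w) ⬝ᵥ Q.mulVec (star w) := by
      rw [hQ]
      simp only [dotProduct, mulVec, Matrix.sum_apply, Finset.sum_mul, Finset.mul_sum]
      rw [Finset.sum_comm]
      refine Finset.sum_congr rfl fun i _ => ?_
      rw [Finset.sum_comm]
    rw [this, aux_conj]
    simp
    rfl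
  constructor
  · -- membership
    refine ⟨w0, fun m => ((((X m)ᴴ * X m)⁻¹ * (X m)ᴴ * Dᴴ * Y m).mulVec (star w0)), F2, ?_⟩
    rw [main w0 (fun m => ((((X m)ᴴ * X m)⁻¹ * (X m)ᴴ * Dᴴ * Y m).mulVec (star w0)))]
    have hz : ∀ m : Fin M,
        (star ((X m).mulVec (((((X m)ᴴ * X m)⁻¹ * (X m)ᴴ * Dᴴ * Y m).mulVec (star w0))
            - ((((X m)ᴴ * X m)⁻¹ * (X m)ᴴ * Dᴴ * Y m).mulVec (star w0))))
          ⬝ᵥ ((X m).mulVec (((((X m)ᴴ * X m)⁻¹ * (X m)ᴴ * Dᴴ * Y m).mulVec (star w0))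
            - ((((X m)ᴴ * X m)⁻¹ * (X m)ᴴ * Dᴴ * Y m).mulVec (star w0))))).re = 0 := by
      intro m; simp
    rw [Finset.sum_congr rfl (fun m _ => hz m), Finset.sum_const, smul_zero, add_zero,
      F1 w0 F2, one_div]
  · -- lower bound
    rintro r ⟨w, h, hw, rfl⟩
    rw [main w h, Quad w hw, Complex.add_re, one_div]
    have h1 : 0 ≤ (star (w - w0) ⬝ᵥ R.mulVec (w - w0)).re := by
      have := hRpd.posSemidef.dotProduct_mulVec_nonneg (w - w0)
      exact ((Complex.le_def).mp this).1
    have h2 : 0 ≤ ∑ m, (star ((X m).mulVec (((((X m)ᴴ * X m)⁻¹ * (X m)ᴴ * Dᴴ * Y m).mulVec (star w)) - h m))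
        ⬝ᵥ ((X m).mulVec (((((X m)ᴴ * X m)⁻¹ * (X m)ᴴ * Dᴴ * Y m).mulVec (star w)) - h m))).re :=
      Finset.sum_nonneg fun m _ => aux_nonneg _
    linarith
end
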